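/- Fix m ∈ ℕ, s ∈ {0,…,m−1}, non-negative integers a, b with b ≤ m−1 and a ≥ s, and r > 0. Then (1/(2π)) ∬_{|w|≤r} (w+z)^a (w̄+z̄)^b w^s du dv = ∑_{n=s}^{m−1} (r^{2n+2}/(2(n−s)!(n+1)!)) · (∂/∂z)^{n−s}(∂/∂z̄)^n [z^a z̄^b] for every z ∈ ℂ, where w = u+iv. -/

import Mathlib

open MeasureTheory Complex

noncomputable def besselJ (s : ℕ) (z : ℂ) : ℂ :=
  ∑' j : ℕ, (-1) ^ j / ((j.factorial : ℂ) * ((j + s).factorial : ℂ)) * (z / 2) ^ (2 * j + s)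

noncomputable def besselJdiv (s : ℕ) (w : ℂ) : ℂ :=
  ∑' j : ℕ, (-1) ^ j / ((j.factorial : ℂ) * ((j + s + 1).factorial : ℂ)) * (w / 2) ^ (2 * j) / 2 ^ (s + 1)

noncomputable def gfun (m s : ℕ) (r : ℝ) (z : ℂ) : ℂ :=
  besselJdiv s (r * z) -
    ∑ n ∈ Finset.Icc s (m - 1),
      ((r : ℂ) * z) ^ (2 * (n - s)) * (-1) ^ (n - s) /
        (((n + 1).factorial : ℂ) * ((n - s).factorial : ℂ) * 2 ^ (2 * n - s + 1))

noncomputable def wderiv (f : ℂ → ℂ) (z : ℂ) : ℂ :=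
  (1 / 2) * (fderiv ℝ f z 1 - Complex.I * fderiv ℝ f z Complex.I)

noncomputable def wderivBar (f : ℂ → ℂ) (z : ℂ) : ℂ :=
  (1 / 2) * (fderiv ℝ f z 1 + Complex.I * fderiv ℝ f z Complex.I)

/-- Left-hand side of the mean value equation (1). -/
noncomputable def mvLHS (m s : ℕ) (r : ℝ) (f : ℂ → ℂ) (z : ℂ) : ℂ :=
  ∑ n ∈ Finset.Icc s (m - 1),
    ((r : ℂ) ^ (2 * n + 2) / (2 * ((n - s).factorial : ℂ) * ((n + 1).factorial : ℂ))) *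
      (wderiv^[n - s] (wderivBar^[n] f)) z

/-- Right-hand side of the mean value equation (1). -/
noncomputable def mvRHS (s : ℕ) (r : ℝ) (f : ℂ → ℂ) (z : ℂ) : ℂ :=
  (1 / (2 * (Real.pi : ℂ))) * ∫ ζ in Metric.closedBall z r, f ζ * (ζ - z) ^ s

lemma exp_theta_int (c : ℤ) :
    ∫ θ in Set.Ioo (-Real.pi) Real.pi, Complex.exp ((c : ℂ) * Complex.I * θ) =
      if c = 0 then 2 * (Real.pi : ℂ) else 0 := by
  rcases eq_or_ne c 0 with h | h
  · subst h
    simp only [Int.cast_zero, zero_mul, Complex.exp_zero, if_pos rfl]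
    rw [setIntegral_const, Measure.real, Real.volume_Ioo]
    rw [ENNReal.toReal_ofReal (by linarith [Real.pi_pos])]
    push_cast
    simp [Complex.real_smul]
    ring
  · rw [if_neg h]
    have h2 : ((c:ℂ) * Complex.I) ≠ 0 :=
      mul_ne_zero (by exact_mod_cast h) Complex.I_ne_zero
    have hle : -Real.pi ≤ Real.pi := by linarith [Real.pi_pos]
    rw [← integral_Ioc_eq_integral_Ioo, ← intervalIntegral.integral_of_le hle]
    rw [integral_exp_mul_complex h2]
    have : (c:ℂ) * Complex.I * (Real.pi : ℂ) =
        (c:ℂ) * Complex.I * ((-Real.pi : ℝ) : ℂ) + c * (2 * Real.pi * Complex.I) := by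
      push_cast; ring
    rw [this, Complex.exp_add, Complex.exp_int_mul_two_pi_mul_I, mul_one, sub_self, zero_div]

lemma radial_int (k : ℕ) {r : ℝ} (hr : 0 < r) :
    ∫ ρ in Set.Ioc (0:ℝ) r, ((ρ:ℂ)) ^ k = (r:ℂ)^(k+1)/(k+1) := by
  rw [← intervalIntegral.integral_of_le hr.le]
  have h : ∀ x : ℝ, ((x:ℂ))^k = ((x^k : ℝ) : ℂ) := by intro x; push_cast; ring
  simp_rw [h]
  rw [intervalIntegral.integral_ofReal, integral_pow]
  push_cast
  ring

lemma disk_int (p q : ℕ) {r : ℝ} (hr : 0 < r) :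
    ∫ w in Metric.closedBall (0:ℂ) r, w ^ p * (starRingEnd ℂ w) ^ q =
      if p = q then (Real.pi : ℂ) * r ^ (2*p+2) / (p+1) else 0 := by
  classical
  rw [← integral_indicator (measurableSet_closedBall)]
  rw [← Complex.integral_comp_polarCoord_symm]
  have key : ∀ x ∈ polarCoord.target,
      x.1 • Set.indicator (Metric.closedBall (0:ℂ) r)
        (fun w => w ^ p * (starRingEnd ℂ w) ^ q) (Complex.polarCoord.symm x)
      = Set.indicator (Set.Iic r ×ˢ (Set.univ : Set ℝ))
          (fun y : ℝ × ℝ => ((y.1:ℂ))^(p+q+1) * Complex.exp (((p:ℂ)-(q:ℂ)) * Complex.I * y.2)) x := by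
    rintro ⟨ρ, θ⟩ hx
    simp only [polarCoord_target, Set.mem_prod, Set.mem_Ioi, Set.mem_Ioo] at hx
    have hρ : (0:ℝ) < ρ := hx.1
    have hsymm : Complex.polarCoord.symm (ρ, θ) = (ρ:ℂ) * Complex.exp (θ * Complex.I) := by
      rw [Complex.polarCoord_symm_apply, Complex.exp_mul_I]
      push_cast
      ring
    have hmem : Complex.polarCoord.symm (ρ, θ) ∈ Metric.closedBall (0:ℂ) r ↔ ρ ≤ r := by
      rw [Metric.mem_closedBall, dist_zero_right, hsymm, norm_mul,
        Complex.norm_exp, Complex.norm_real]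
      simp [abs_of_pos hρ]
    have hmem2 : ((ρ, θ) : ℝ × ℝ) ∈ Set.Iic r ×ˢ (Set.univ : Set ℝ) ↔ ρ ≤ r := by simp
    rw [Set.indicator_apply, Set.indicator_apply]
    by_cases hc : ρ ≤ r
    · rw [if_pos (hmem.mpr hc), if_pos (hmem2.mpr hc), hsymm]
      rw [map_mul, Complex.conj_ofReal, ← Complex.exp_conj]
      have hconj : starRingEnd ℂ ((θ:ℂ) * Complex.I) = -((θ:ℂ) * Complex.I) := by
        simp [Complex.conj_I, Complex.conj_ofReal]
      rw [hconj, mul_pow, mul_pow, ← Complex.exp_nat_mul, ← Complex.exp_nat_mul,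
        Complex.real_smul]
      have hexp : Complex.exp ((p:ℂ) * ((θ:ℂ) * Complex.I)) *
          Complex.exp ((q:ℂ) * -((θ:ℂ) * Complex.I))
          = Complex.exp (((p:ℂ)-(q:ℂ)) * Complex.I * θ) := by
        rw [← Complex.exp_add]; congr 1; ring
      rw [← hexp]
      ring
    · rw [if_neg (fun h => hc (hmem.mp h)), if_neg (fun h => hc (hmem2.mp h)), smul_zero]
  rw [setIntegral_congr_fun polarCoord.open_target.measurableSet key]
  rw [setIntegral_indicator (measurableSet_Iic.prod MeasurableSet.univ)]
  have hset : polarCoord.target ∩ (Set.Iic r ×ˢ (Set.univ : Set ℝ))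
      = Set.Ioc 0 r ×ˢ Set.Ioo (-Real.pi) Real.pi := by
    rw [polarCoord_target, Set.prod_inter_prod, Set.inter_univ, Set.Ioi_inter_Iic]
  rw [hset, Measure.volume_eq_prod]
  rw [setIntegral_prod_mul (fun ρ:ℝ => ((ρ:ℂ))^(p+q+1))
    (fun θ:ℝ => Complex.exp (((p:ℂ)-(q:ℂ)) * Complex.I * θ)), radial_int _ hr]
  have hcast : ((p:ℂ) - (q:ℂ)) = (((p:ℤ) - (q:ℤ) : ℤ) : ℂ) := by push_cast; ring
  rw [hcast, exp_theta_int]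
  rcases eq_or_ne p q with h | h
  · subst h
    rw [if_pos rfl, if_pos (by ring)]
    have h1 : ((2*p+2 : ℕ) : ℂ) ≠ 0 := Nat.cast_ne_zero.mpr (by omega)
    have h2 : ((p+1 : ℕ) : ℂ) ≠ 0 := Nat.cast_ne_zero.mpr (by omega)
    rw [show p + p + 1 + 1 = 2*p+2 by ring]
    push_cast at h1 h2 ⊢
    have h3 : ((p:ℂ) + p + 1 + 1) = 2*((p:ℂ)+1) := by ring
    have h4 : (2:ℂ)*((p:ℂ)+1) ≠ 0 := mul_ne_zero two_ne_zero h2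
    rw [h3, div_mul_eq_mul_div, div_eq_div_iff h4 h2]
    ring
  · rw [if_neg h, if_neg (by simpa [sub_eq_zero] using fun hh => h (by exact_mod_cast hh)), mul_zero]

lemma fderiv_cmono_apply (c : ℂ) (a b : ℕ) (z v : ℂ) :
    fderiv ℝ (fun ζ : ℂ => c * (ζ ^ a * (starRingEnd ℂ ζ) ^ b)) z v =
      c * (((a:ℂ) * z^(a-1) * v) * (starRingEnd ℂ z)^b +
        z^a * ((b:ℂ) * (starRingEnd ℂ z)^(b-1) * (starRingEnd ℂ v))) := by
  have h1 : HasFDerivAt (fun ζ : ℂ => ζ ^ a)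
      (((ContinuousLinearMap.smulRight (1 : ℂ →L[ℂ] ℂ) ((a:ℂ) * z ^ (a-1)))).restrictScalars ℝ) z :=
    ((hasDerivAt_pow a z).hasFDerivAt).restrictScalars ℝ
  have hconj : HasFDerivAt (fun ζ : ℂ => starRingEnd ℂ ζ)
      (Complex.conjCLE : ℂ ≃L[ℝ] ℂ).toContinuousLinearMap z :=
    Complex.conjCLE.hasFDerivAt
  have h2pow : HasFDerivAt (fun w : ℂ => w ^ b)
      (((ContinuousLinearMap.smulRight (1 : ℂ →L[ℂ] ℂ)
        ((b:ℂ) * (starRingEnd ℂ z) ^ (b-1)))).restrictScalars ℝ) (starRingEnd ℂ z) :=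
    ((hasDerivAt_pow b _).hasFDerivAt).restrictScalars ℝ
  have h2 : HasFDerivAt (fun ζ : ℂ => (starRingEnd ℂ ζ) ^ b)
      ((((ContinuousLinearMap.smulRight (1 : ℂ →L[ℂ] ℂ)
        ((b:ℂ) * (starRingEnd ℂ z) ^ (b-1)))).restrictScalars ℝ).comp
        (Complex.conjCLE : ℂ ≃L[ℝ] ℂ).toContinuousLinearMap) z :=
    h2pow.comp z hconj
  have h3 := (h1.mul h2).const_mul c
  rw [HasFDerivAt.fderiv (f := fun ζ : ℂ => c * (ζ ^ a * (starRingEnd ℂ ζ) ^ b)) h3]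
  simp only [ContinuousLinearMap.smul_apply, ContinuousLinearMap.add_apply,
    ContinuousLinearMap.comp_apply, ContinuousLinearMap.coe_restrictScalars',
    ContinuousLinearMap.smulRight_apply, ContinuousLinearMap.one_apply,
    ContinuousLinearEquiv.coe_coe, Complex.conjCLE_apply, smul_eq_mul]
  ring

lemma wderiv_cmono (c : ℂ) (a b : ℕ) :
    wderiv (fun ζ : ℂ => c * (ζ ^ a * (starRingEnd ℂ ζ) ^ b)) =
      fun z => (c * a) * (z ^ (a-1) * (starRingEnd ℂ z) ^ b) := by
  funext z
  unfold wderiv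
  rw [fderiv_cmono_apply, fderiv_cmono_apply]
  simp only [map_one, Complex.conj_I, mul_one]
  have : Complex.I * Complex.I = -1 := Complex.I_mul_I
  field_simp
  ring_nf
  rw [Complex.I_sq]
  ring

lemma wderivBar_cmono (c : ℂ) (a b : ℕ) :
    wderivBar (fun ζ : ℂ => c * (ζ ^ a * (starRingEnd ℂ ζ) ^ b)) =
      fun z => (c * b) * (z ^ a * (starRingEnd ℂ z) ^ (b-1)) := by
  funext z
  unfold wderivBar
  rw [fderiv_cmono_apply, fderiv_cmono_apply]
  simp only [map_one, Complex.conj_I, mul_one]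
  ring_nf
  rw [Complex.I_sq]
  ring

lemma wderivBar_iter (c : ℂ) (a b n : ℕ) :
    wderivBar^[n] (fun ζ : ℂ => c * (ζ ^ a * (starRingEnd ℂ ζ) ^ b)) =
      fun z => (c * (b.descFactorial n : ℂ)) * (z ^ a * (starRingEnd ℂ z) ^ (b - n)) := by
  induction n with
  | zero => simp
  | succ n ih =>
      rw [Function.iterate_succ_apply', ih, wderivBar_cmono]
      funext z
      rw [Nat.descFactorial_succ]
      have : b - n - 1 = b - (n+1) := by omega
      rw [this]
      push_cast
      ring

lemma wderiv_iter (c : ℂ) (a b k : ℕ) :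
    wderiv^[k] (fun ζ : ℂ => c * (ζ ^ a * (starRingEnd ℂ ζ) ^ b)) =
      fun z => (c * (a.descFactorial k : ℂ)) * (z ^ (a - k) * (starRingEnd ℂ z) ^ b) := by
  induction k with
  | zero => simp
  | succ k ih =>
      rw [Function.iterate_succ_apply', ih, wderiv_cmono]
      funext z
      rw [Nat.descFactorial_succ]
      have : a - k - 1 = a - (k+1) := by omega
      rw [this]
      push_cast
      ring

theorem mean_value_on_monomials (m s : ℕ) (hs : s < m) (a b : ℕ) (hb : b ≤ m - 1) (ha : s ≤ a)
    (r : ℝ) (hr : 0 < r) (z : ℂ) :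
    (1 / (2 * (Real.pi : ℂ))) *
        ∫ w in Metric.closedBall (0 : ℂ) r,
          (w + z) ^ a * (starRingEnd ℂ w + starRingEnd ℂ z) ^ b * w ^ s =
      ∑ n ∈ Finset.Icc s (m - 1),
        ((r : ℂ) ^ (2 * n + 2) / (2 * ((n - s).factorial : ℂ) * ((n + 1).factorial : ℂ))) *
          (wderiv^[n - s] (wderivBar^[n] (fun ζ => ζ ^ a * (starRingEnd ℂ ζ) ^ b))) z := by
  classical
  -- rewrite the iterated Wirtinger derivatives
  have hf : (fun ζ : ℂ => ζ ^ a * (starRingEnd ℂ ζ) ^ b)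
      = fun ζ : ℂ => (1:ℂ) * (ζ ^ a * (starRingEnd ℂ ζ) ^ b) := by
    funext ζ; rw [one_mul]
  have hterm : ∀ n : ℕ,
      (wderiv^[n - s] (wderivBar^[n] (fun ζ : ℂ => ζ ^ a * (starRingEnd ℂ ζ) ^ b))) z
      = ((b.descFactorial n : ℂ) * (a.descFactorial (n - s) : ℂ)) *
          (z ^ (a - (n - s)) * (starRingEnd ℂ z) ^ (b - n)) := by
    intro n
    rw [hf]
    simp only [wderivBar_iter, wderiv_iter]
    ring
  simp only [hterm]
  -- expand the integrand
  have hexpand : ∀ w : ℂ, (w + z) ^ a * (starRingEnd ℂ w + starRingEnd ℂ z) ^ b * w ^ s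
      = ∑ k ∈ Finset.range (a+1), ∑ l ∈ Finset.range (b+1),
          (((a.choose k : ℂ) * z^(a-k)) * ((b.choose l : ℂ) * (starRingEnd ℂ z)^(b-l))) *
            (w^(k+s) * (starRingEnd ℂ w)^l) := by
    intro w
    rw [add_pow, add_pow, Finset.sum_mul_sum, Finset.sum_mul]
    refine Finset.sum_congr rfl fun k _ => ?_
    rw [Finset.sum_mul]
    refine Finset.sum_congr rfl fun l _ => ?_
    rw [pow_add]
    ring
  simp only [hexpand]
  -- integrability
  have hint : ∀ (p q : ℕ) (C : ℂ),
      IntegrableOn (fun w : ℂ => C * (w^p * (starRingEnd ℂ w)^q))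
        (Metric.closedBall 0 r) volume := by
    intro p q C
    apply ContinuousOn.integrableOn_compact (isCompact_closedBall _ _)
    exact (continuous_const.mul ((continuous_pow p).mul (continuous_star.pow q))).continuousOn
  -- interchange integral and sums, compute each integral
  have h1 : (∫ w in Metric.closedBall (0:ℂ) r, ∑ k ∈ Finset.range (a+1), ∑ l ∈ Finset.range (b+1),
          (((a.choose k : ℂ) * z^(a-k)) * ((b.choose l : ℂ) * (starRingEnd ℂ z)^(b-l))) *
            (w^(k+s) * (starRingEnd ℂ w)^l))
      = ∑ k ∈ Finset.range (a+1), ∑ l ∈ Finset.range (b+1),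
          (((a.choose k : ℂ) * z^(a-k)) * ((b.choose l : ℂ) * (starRingEnd ℂ z)^(b-l))) *
            (if k+s = l then (Real.pi : ℂ) * r ^ (2*(k+s)+2) / (((k+s : ℕ):ℂ)+1) else 0) := by
    rw [MeasureTheory.integral_finset_sum _
      (fun k _ => MeasureTheory.integrable_finset_sum _ (fun l _ => hint (k+s) l _))]
    refine Finset.sum_congr rfl fun k _ => ?_
    rw [MeasureTheory.integral_finset_sum _ (fun l _ => hint (k+s) l _)]
    refine Finset.sum_congr rfl fun l _ => ?_
    rw [MeasureTheory.integral_const_mul, disk_int _ _ hr]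
  rw [h1]
  simp only [Finset.mul_sum, mul_ite, mul_zero, Finset.sum_ite_eq, Finset.mem_range]
  -- now both sides are single sums; align index sets
  set N := max (a + s) (m - 1) with hN
  have hsub : Finset.Icc s (m-1) ⊆ Finset.Icc s N :=
    Finset.Icc_subset_Icc_right (le_max_right _ _)
  rw [Finset.sum_subset hsub (fun n hn hnn => ?_)]
  · rw [← Finset.Ico_add_one_right_eq_Icc, Finset.sum_Ico_eq_sum_range]
    refine Eq.trans (Finset.sum_congr rfl fun k hk => ?_)
      (Finset.sum_subset (Finset.range_subset_range.mpr (by omega)) fun x hx hnx => ?_)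
    · -- termwise identity on range (a+1)
      rw [show s + k - s = k from by omega, show s + k = k + s from Nat.add_comm s k]
      by_cases hkb : k + s < b + 1
      · rw [if_pos hkb]
        rw [Nat.descFactorial_eq_factorial_mul_choose b (k+s),
          Nat.descFactorial_eq_factorial_mul_choose a k,
          show 2*(k+s)+2 = 2*(k+s)+2 from rfl]
        have hπ : (Real.pi : ℂ) ≠ 0 := Complex.ofReal_ne_zero.mpr Real.pi_ne_zero
        have hf1 : ((k.factorial : ℕ) : ℂ) ≠ 0 := Nat.cast_ne_zero.mpr k.factorial_ne_zero
        have hf2 : (((k+s).factorial : ℕ) : ℂ) ≠ 0 := Nat.cast_ne_zero.mpr (k+s).factorial_ne_zero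
        have hf3 : (((k+s+1).factorial : ℕ) : ℂ) ≠ 0 :=
          Nat.cast_ne_zero.mpr (k+s+1).factorial_ne_zero
        have hk1 : ((k:ℂ) + (s:ℂ) + 1) ≠ 0 := by
          have : (((k+s+1 : ℕ)) : ℂ) ≠ 0 := Nat.cast_ne_zero.mpr (by omega)
          push_cast at this
          convert this using 2 <;> ring
        rw [Nat.factorial_succ (k+s)]
        push_cast
        field_simp
      · rw [if_neg hkb]
        rw [Nat.descFactorial_eq_zero_iff_lt.mpr (show b < k + s by omega)]
        simp
    · -- vanishing of extra RHS terms: x > a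
      have hax : a < x := by
        simp only [Finset.mem_range, not_lt] at hnx
        omega
      rw [show s + x - s = x from by omega,
        Nat.descFactorial_eq_zero_iff_lt.mpr hax]
      simp
  · -- vanishing of extra terms in Icc s N beyond m-1 : n > b
    have hbn : b < n := by
      simp only [Finset.mem_Icc] at hn hnn
      omega
    rw [Nat.descFactorial_eq_zero_iff_lt.mpr hbn]
    simp
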